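/- Let H be a complex Hilbert space, A a bounded self-adjoint operator on H, and λ₀ ≤ 0 a real number with Re⟨Au,u⟩ ≥ λ₀‖u‖² for all u ∈ H. Let J and J' be bounded self-adjoint operators on H with 0 ≤ Re⟨Ju,u⟩ ≤ ‖u‖² for all u, and J∘J + J'∘J' = 1. Let γ ≥ 0 satisfy ‖[J,[J,A]]‖ ≤ γ and ‖[J',[J',A]]‖ ≤ γ, and let α > 0 satisfy Re⟨A(J'u),J'u⟩ ≥ α‖J'u‖² for all u ∈ H. Let E be an orthogonal projection on H such that Re⟨A(Eu),Eu⟩ ≤ λ‖Eu‖² for all u ∈ H, where λ is a real number. If α > λ + γ, then for every u ∈ H one has ‖J'(Eu)‖² ≤ ((λ+γ−λ₀)/(α−λ₀))·‖Eu‖². -/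

import Mathlib

/-- **Localization estimate for spectral projections** (Proposition on localization).
If `A` is self-adjoint with `Re⟨Au,u⟩ ≥ λ₀‖u‖²`, `J, J'` are self-adjoint with
`0 ≤ Re⟨Ju,u⟩ ≤ ‖u‖²` and `J² + J'² = 1`, the double commutators `[J,[J,A]]` and
`[J',[J',A]]` have norm at most `γ`, `Re⟨A J'u, J'u⟩ ≥ α‖J'u‖²`, and `E` is an orthogonal
projection with `Re⟨A Eu, Eu⟩ ≤ λ‖Eu‖²`, then `α > λ + γ` implies
`‖J′(Eu)‖² ≤ ((λ+γ−λ₀)/(α−λ₀))‖Eu‖²` for all `u`. -/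
theorem localization_upper_bound_Jprime {H : Type*} [NormedAddCommGroup H]
    [InnerProductSpace ℂ H] [CompleteSpace H]
    (A J J' E : H →L[ℂ] H)
    (hA : IsSelfAdjoint A)
    (lam₀ : ℝ) (hlam₀ : lam₀ ≤ 0)
    (hAlow : ∀ u : H, lam₀ * ‖u‖ ^ 2 ≤ (inner ℂ (A u) u : ℂ).re)
    (hJ : IsSelfAdjoint J) (hJ' : IsSelfAdjoint J')
    (hJ0 : ∀ u : H, 0 ≤ (inner ℂ (J u) u : ℂ).re)
    (hJ1 : ∀ u : H, (inner ℂ (J u) u : ℂ).re ≤ ‖u‖ ^ 2)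
    (hJJ' : J * J + J' * J' = 1)
    (γ : ℝ) (hγ : 0 ≤ γ)
    (hcommJ : ‖⁅J, ⁅J, A⁆⁆‖ ≤ γ) (hcommJ' : ‖⁅J', ⁅J', A⁆⁆‖ ≤ γ)
    (α : ℝ) (hα : 0 < α)
    (hAJ' : ∀ u : H, α * ‖J' u‖ ^ 2 ≤ (inner ℂ (A (J' u)) (J' u) : ℂ).re)
    (hEproj : E * E = E) (hEsa : IsSelfAdjoint E)
    (lam : ℝ)
    (hAE : ∀ u : H, (inner ℂ (A (E u)) (E u) : ℂ).re ≤ lam * ‖E u‖ ^ 2)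
    (hgap : α > lam + γ) :
    ∀ u : H, ‖J' (E u)‖ ^ 2 ≤ ((lam + γ - lam₀) / (α - lam₀)) * ‖E u‖ ^ 2 := by
  intro u
  set v := E u with hv
  -- move a self-adjoint operator across the inner product
  have hmove : ∀ (T : H →L[ℂ] H), IsSelfAdjoint T → ∀ x y : H,
      (inner ℂ (T x) y : ℂ) = inner ℂ x (T y) := by
    intro T hT x y
    nth_rewrite 1 [← hT.adjoint_eq]
    exact ContinuousLinearMap.adjoint_inner_left T y x
  -- ‖J v‖² + ‖J' v‖² = ‖v‖²
  have hsum : ‖J v‖ ^ 2 + ‖J' v‖ ^ 2 = ‖v‖ ^ 2 := by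
    have h := congrArg (fun T : H →L[ℂ] H => ((inner ℂ (T v) v : ℂ)).re) hJJ'
    simp only [ContinuousLinearMap.add_apply, ContinuousLinearMap.mul_apply,
      ContinuousLinearMap.one_apply, inner_add_left] at h
    rw [hmove J hJ (J v) v, hmove J' hJ' (J' v) v] at h
    simp only [inner_self_eq_norm_sq_to_K] at h
    exact_mod_cast h
  -- IMS identity
  set B : H →L[ℂ] H := ⁅J, ⁅J, A⁆⁆ + ⁅J', ⁅J', A⁆⁆ with hB
  have hexp : B = (J*J + J'*J')*A + A*(J*J + J'*J') - 2*(J*A*J) - 2*(J'*A*J') := by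
    simp only [hB, Ring.lie_def]
    noncomm_ring
  rw [hJJ'] at hexp
  have hexp' : B = A + A - (J*A*J + J*A*J) - (J'*A*J' + J'*A*J') := by
    rw [hexp]; noncomm_ring
  -- evaluate at v, take Re of inner with v
  have hval := congrArg (fun T : H →L[ℂ] H => ((inner ℂ (T v) v : ℂ)).re) hexp'
  simp only [ContinuousLinearMap.sub_apply, ContinuousLinearMap.add_apply,
    ContinuousLinearMap.mul_apply, inner_sub_left, inner_add_left,
    Complex.add_re, Complex.sub_re] at hval
  -- rewrite the sandwiched terms
  have hJterm : (inner ℂ (J (A (J v))) v : ℂ) = inner ℂ (A (J v)) (J v) :=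
    hmove J hJ (A (J v)) v
  have hJ'term : (inner ℂ (J' (A (J' v))) v : ℂ) = inner ℂ (A (J' v)) (J' v) :=
    hmove J' hJ' (A (J' v)) v
  -- bound on Re⟨Bv, v⟩
  have hBnorm : ‖B‖ ≤ 2 * γ := by
    calc ‖B‖ ≤ ‖⁅J, ⁅J, A⁆⁆‖ + ‖⁅J', ⁅J', A⁆⁆‖ := norm_add_le _ _
    _ ≤ 2 * γ := by linarith
  have hBbound : |(inner ℂ (B v) v : ℂ).re| ≤ 2 * γ * ‖v‖ ^ 2 := by
    calc |(inner ℂ (B v) v : ℂ).re| ≤ ‖(inner ℂ (B v) v : ℂ)‖ := Complex.abs_re_le_norm _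
    _ ≤ ‖B v‖ * ‖v‖ := norm_inner_le_norm _ _
    _ ≤ (‖B‖ * ‖v‖) * ‖v‖ := by
        have := ContinuousLinearMap.le_opNorm B v
        have h0 : (0:ℝ) ≤ ‖v‖ := norm_nonneg _
        nlinarith
    _ ≤ 2 * γ * ‖v‖ ^ 2 := by
        have h0 : (0:ℝ) ≤ ‖v‖ := norm_nonneg _
        nlinarith
  -- collect the real quantities
  have hAv : (inner ℂ (A v) v : ℂ).re ≤ lam * ‖v‖ ^ 2 := hAE u
  have ha : lam₀ * ‖J v‖ ^ 2 ≤ (inner ℂ (A (J v)) (J v) : ℂ).re := hAlow (J v)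
  have hb : α * ‖J' v‖ ^ 2 ≤ (inner ℂ (A (J' v)) (J' v) : ℂ).re := hAJ' v
  rw [hJterm, hJ'term] at hval
  -- hval : Re⟨Bv,v⟩ = Re⟨Av,v⟩ + Re⟨Av,v⟩ - 2 Re⟨A Jv, Jv⟩ - 2 Re⟨A J'v, J'v⟩ (roughly)
  have habs := abs_le.mp hBbound
  have hd : 0 < α - lam₀ := by linarith
  have hls : lam₀ * ‖J v‖ ^ 2 + lam₀ * ‖J' v‖ ^ 2 = lam₀ * ‖v‖ ^ 2 := by
    rw [← hsum]; ring
  have key : (α - lam₀) * ‖J' v‖ ^ 2 ≤ (lam + γ - lam₀) * ‖v‖ ^ 2 := by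
    nlinarith [habs.1, hval, ha, hb, hAv, hls]
  rw [div_mul_eq_mul_div, le_div_iff₀ hd]
  nlinarith [key]
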